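/- For β ∈ [0, 1), one has 1 − (1/(2√π))·∫₀^∞ exp(−y²/4)·erfc(βy/(2√(1−β²))) dy ≥ 1 − √((2 − 2β²)/(2 − β²)). -/

import Mathlib

open Real MeasureTheory

noncomputable def erf (t : ℝ) : ℝ := (2 / Real.sqrt π) * ∫ z in (0:ℝ)..t, Real.exp (-z^2)

noncomputable def erfc (t : ℝ) : ℝ := 1 - erf t

lemma gauss_integrable : Integrable (fun z : ℝ => Real.exp (-z^2)) := by
  have := integrable_exp_neg_mul_sq (b := 1) one_pos
  simpa using this

lemma gauss_int : (∫ z in Set.Ioi (0:ℝ), Real.exp (-z^2)) = Real.sqrt π / 2 := by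
  have := integral_gaussian_Ioi 1
  simpa using this

lemma erfc_eq (t : ℝ) (ht : 0 ≤ t) :
    erfc t = (2 / Real.sqrt π) * ∫ z in Set.Ioi t, Real.exp (-z^2) := by
  have hsplit : (∫ z in Set.Ioc 0 t, Real.exp (-z^2)) + (∫ z in Set.Ioi t, Real.exp (-z^2))
      = ∫ z in Set.Ioi (0:ℝ), Real.exp (-z^2) := by
    rw [← MeasureTheory.setIntegral_union]
    · rw [Set.Ioc_union_Ioi_eq_Ioi ht]
    · exact Set.Ioc_disjoint_Ioi le_rfl
    · exact measurableSet_Ioi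
    · exact gauss_integrable.integrableOn
    · exact gauss_integrable.integrableOn
  have herf : erf t = (2 / Real.sqrt π) * ∫ z in Set.Ioc 0 t, Real.exp (-z^2) := by
    rw [erf, intervalIntegral.integral_of_le ht]
  have hpi : Real.sqrt π ≠ 0 := by positivity
  rw [erfc, herf]
  rw [gauss_int] at hsplit
  field_simp
  linarith [hsplit]

lemma gauss_half_integrable : Integrable (fun z : ℝ => Real.exp (-z^2/2)) := by
  have := integrable_exp_neg_mul_sq (b := (1:ℝ)/2) (by norm_num)
  refine this.congr ?_
  filter_upwards with z
  ring_nf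

lemma erfc_le (t : ℝ) (ht : 0 ≤ t) : erfc t ≤ 2 * Real.exp (-t^2/2) := by
  rw [erfc_eq t ht]
  have h1 : (∫ z in Set.Ioi t, Real.exp (-z^2))
      ≤ ∫ z in Set.Ioi t, Real.exp (-t^2/2) * Real.exp (-z^2/2) := by
    refine setIntegral_mono_on gauss_integrable.integrableOn
      ((gauss_half_integrable.const_mul _).integrableOn) measurableSet_Ioi ?_
    intro z hz
    rw [← Real.exp_add]
    apply Real.exp_le_exp.mpr
    have : t ≤ z := le_of_lt hz
    nlinarith
  have h2 : (∫ z in Set.Ioi t, Real.exp (-t^2/2) * Real.exp (-z^2/2))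
      = Real.exp (-t^2/2) * ∫ z in Set.Ioi t, Real.exp (-z^2/2) := by
    rw [integral_const_mul]
  have h3 : (∫ z in Set.Ioi t, Real.exp (-z^2/2))
      ≤ ∫ z in Set.Ioi (0:ℝ), Real.exp (-z^2/2) := by
    refine setIntegral_mono_set gauss_half_integrable.integrableOn ?_ ?_
    · filter_upwards with z using Real.exp_nonneg _
    · exact HasSubset.Subset.eventuallyLE (Set.Ioi_subset_Ioi ht)
  have h4 : (∫ z in Set.Ioi (0:ℝ), Real.exp (-z^2/2)) ≤ Real.sqrt π := by
    have := integral_gaussian_Ioi ((1:ℝ)/2)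
    have heq : (∫ z in Set.Ioi (0:ℝ), Real.exp (-z^2/2))
        = ∫ z in Set.Ioi (0:ℝ), Real.exp (-(1/2) * z^2) := by
      congr 1; ext z; ring_nf
    rw [heq, this]
    rw [show π / (1/2 : ℝ) = 2 * π by ring, Real.sqrt_mul (by norm_num)]
    have h2 : Real.sqrt 2 ≤ 2 := by
      nlinarith [Real.sq_sqrt (by norm_num : (0:ℝ) ≤ 2), Real.sqrt_nonneg 2]
    nlinarith [Real.sqrt_nonneg π, Real.sqrt_nonneg 2]
  have hpi : (0:ℝ) < Real.sqrt π := Real.sqrt_pos.mpr Real.pi_pos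
  calc (2 / Real.sqrt π) * ∫ z in Set.Ioi t, Real.exp (-z^2)
      ≤ (2 / Real.sqrt π) * (Real.exp (-t^2/2) * Real.sqrt π) := by
        apply mul_le_mul_of_nonneg_left _ (by positivity)
        calc (∫ z in Set.Ioi t, Real.exp (-z^2))
            ≤ Real.exp (-t^2/2) * ∫ z in Set.Ioi t, Real.exp (-z^2/2) := by rw [← h2]; exact h1
          _ ≤ Real.exp (-t^2/2) * Real.sqrt π := by
              exact mul_le_mul_of_nonneg_left (h3.trans h4) (Real.exp_nonneg _)
    _ = 2 * Real.exp (-t^2/2) := by field_simp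

lemma erfc_nonneg (t : ℝ) (ht : 0 ≤ t) : 0 ≤ erfc t := by
  rw [erfc_eq t ht]
  have : 0 ≤ ∫ z in Set.Ioi t, Real.exp (-z^2) :=
    setIntegral_nonneg measurableSet_Ioi (fun z _ => Real.exp_nonneg _)
  positivity

theorem quadrant_prob_lower_bound (β : ℝ) (hβ0 : 0 ≤ β) (hβ1 : β < 1) :
    1 - (1 / (2 * Real.sqrt π)) *
        ∫ y in Set.Ioi (0:ℝ), Real.exp (-y^2 / 4) * erfc (β * y / (2 * Real.sqrt (1 - β^2))) ≥
      1 - Real.sqrt ((2 - 2 * β^2) / (2 - β^2)) := by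
  have hb2 : 0 < 1 - β^2 := by nlinarith
  have ha0 : 0 < Real.sqrt (1 - β^2) := Real.sqrt_pos.mpr hb2
  have ha2 : (Real.sqrt (1 - β^2))^2 = 1 - β^2 := Real.sq_sqrt hb2.le
  set c : ℝ := (2 - β^2) / (8 * (1 - β^2)) with hc
  have hc0 : 0 < c := by
    apply div_pos (by nlinarith) (by linarith)
  -- pointwise bound
  have hpt : ∀ y ∈ Set.Ioi (0:ℝ),
      Real.exp (-y^2 / 4) * erfc (β * y / (2 * Real.sqrt (1 - β^2)))
        ≤ 2 * Real.exp (-c * y^2) := by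
    intro y hy
    have hy0 : 0 < y := hy
    have htnn : 0 ≤ β * y / (2 * Real.sqrt (1 - β^2)) := by positivity
    have hE := erfc_le _ htnn
    calc Real.exp (-y^2 / 4) * erfc (β * y / (2 * Real.sqrt (1 - β^2)))
        ≤ Real.exp (-y^2 / 4) * (2 * Real.exp (-(β * y / (2 * Real.sqrt (1 - β^2)))^2 / 2)) :=
          mul_le_mul_of_nonneg_left hE (Real.exp_nonneg _)
      _ = 2 * Real.exp (-c * y^2) := by
          rw [mul_comm, mul_assoc, ← Real.exp_add]
          congr 2
          rw [div_pow, mul_pow, mul_pow, ha2, hc]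
          have h1 : (1:ℝ) - β^2 ≠ 0 := hb2.ne'
          field_simp
          ring
  have hnn : ∀ y ∈ Set.Ioi (0:ℝ),
      0 ≤ Real.exp (-y^2 / 4) * erfc (β * y / (2 * Real.sqrt (1 - β^2))) := by
    intro y hy
    have hy0 : 0 < y := hy
    exact mul_nonneg (Real.exp_nonneg _) (erfc_nonneg _ (by positivity))
  have hg : Integrable (fun y : ℝ => 2 * Real.exp (-c * y^2)) :=
    (integrable_exp_neg_mul_sq hc0).const_mul 2
  have hI : (∫ y in Set.Ioi (0:ℝ),
        Real.exp (-y^2 / 4) * erfc (β * y / (2 * Real.sqrt (1 - β^2))))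
      ≤ ∫ y in Set.Ioi (0:ℝ), 2 * Real.exp (-c * y^2) := by
    refine integral_mono_of_nonneg ?_ hg.integrableOn ?_
    · exact ae_restrict_of_forall_mem measurableSet_Ioi hnn
    · exact ae_restrict_of_forall_mem measurableSet_Ioi hpt
  have hval : (∫ y in Set.Ioi (0:ℝ), 2 * Real.exp (-c * y^2)) = Real.sqrt (π / c) := by
    rw [integral_const_mul, integral_gaussian_Ioi]
    ring
  have hpi : (0:ℝ) < Real.sqrt π := Real.sqrt_pos.mpr Real.pi_pos
  have hfin : (1 / (2 * Real.sqrt π)) * Real.sqrt (π / c)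
      = Real.sqrt ((2 - 2 * β^2) / (2 - β^2)) := by
    rw [show (2 - 2 * β^2) / (2 - β^2) = (1 / (2 * Real.sqrt π) * Real.sqrt (π / c))^2 by
      rw [mul_pow, Real.sq_sqrt (div_pos Real.pi_pos hc0).le, div_pow, one_pow, mul_pow,
        Real.sq_sqrt Real.pi_pos.le, hc]
      have hπ : π ≠ 0 := Real.pi_ne_zero
      have h1 : (1:ℝ) - β^2 ≠ 0 := hb2.ne'
      have h2 : (2:ℝ) - β^2 ≠ 0 := by nlinarith
      field_simp
      ring]
    rw [Real.sqrt_sq (by positivity)]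
  have hmul : (1 / (2 * Real.sqrt π)) *
      (∫ y in Set.Ioi (0:ℝ), Real.exp (-y^2 / 4) * erfc (β * y / (2 * Real.sqrt (1 - β^2))))
      ≤ Real.sqrt ((2 - 2 * β^2) / (2 - β^2)) := by
    rw [← hfin]
    apply mul_le_mul_of_nonneg_left _ (by positivity)
    rw [← hval]; exact hI
  linarith
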